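/- For any F ∈ F²(a,b), there exists an open set U ⊆ [a,b] with λ(U) = λ([a,b]) (λ the Lebesgue measure) such that for each x ∈ U: (1) there exist an open set B_x containing x and a real analytic function H_x on [a,b] with F ≡ H_x on B_x; (2) the gradient ∇F(x) exists; and (3) ∇F_α(x) → ∇F(x) as α → ∞, where F_α is the softplus approximation of F. -/

import Mathlib

open MeasureTheory Filter Topology

lemma analytic_continuous {E F : Type*} [NormedAddCommGroup E] [NormedSpace ℝ E]
    [NormedAddCommGroup F] [NormedSpace ℝ F] {f : E → F}
    (hf : AnalyticOnNhd ℝ f Set.univ) : Continuous f :=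
  continuous_iff_continuousAt.2 fun x => (hf x (Set.mem_univ x)).continuousAt

lemma analytic_zero_null_1d {f : ℝ → ℝ} (hf : AnalyticOnNhd ℝ f Set.univ)
    {x₀ : ℝ} (hne : f x₀ ≠ 0) : volume {x : ℝ | f x = 0} = 0 := by
  set Z := {x : ℝ | f x = 0} with hZ
  have hZc : IsClosed Z := isClosed_eq (analytic_continuous hf) continuous_const
  -- each point of Z is isolated
  have hiso : ∀ z ∈ Z, ∀ᶠ x in nhdsWithin z {z}ᶜ, f x ≠ 0 := by
    intro z hz
    rcases (hf z (Set.mem_univ z)).eventually_eq_zero_or_eventually_ne_zero with h | h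
    · exfalso
      have := hf.eqOn_zero_of_preconnected_of_eventuallyEq_zero
        (isPreconnected_univ) (Set.mem_univ z) h
      exact hne (this (Set.mem_univ x₀))
    · exact h
  have hdisc : DiscreteTopology Z := by
    rw [discreteTopology_subtype_iff]
    intro z hz
    rw [← Filter.empty_mem_iff_bot]
    have h1 : {x | f x ≠ 0} ∈ nhdsWithin z {z}ᶜ := hiso z hz
    have h2 : Z ∈ Filter.principal Z := Filter.mem_principal_self Z
    have := Filter.inter_mem_inf h1 h2
    have heq : {x | f x ≠ 0} ∩ Z = ∅ := by
      ext x; simp only [Set.mem_empty_iff_false, Set.mem_inter_iff, Set.mem_setOf_eq,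
        iff_false, not_and]
      intro hne' hx; exact absurd hx hne'
    rwa [heq] at this
  -- Z is a countable union of finite sets
  have hcover : Z ⊆ ⋃ m : ℕ, Set.Icc (-(m:ℝ)) m ∩ Z := by
    intro x hx
    obtain ⟨m, hm⟩ := exists_nat_ge |x|
    exact Set.mem_iUnion.2 ⟨m, ⟨(abs_le.1 hm).1, (abs_le.1 hm).2⟩, hx⟩
  have hfin : ∀ m : ℕ, (Set.Icc (-(m:ℝ)) m ∩ Z).Finite := by
    intro m
    refine (isCompact_Icc.inter_right hZc).finite ?_
    exact isDiscrete_iff_discreteTopology.mpr (DiscreteTopology.of_subset hdisc Set.inter_subset_right)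
  refine measure_mono_null hcover (measure_iUnion_null fun m => (hfin m).measure_zero _)


/-- The map `(t, x') ↦ Fin.insertNth 0 t x'` as analytic. -/
lemma analytic_insertNth (n : ℕ) :
    AnalyticOnNhd ℝ (fun p : ℝ × (Fin n → ℝ) => (Fin.insertNth 0 p.1 p.2 : Fin (n+1) → ℝ))
      Set.univ := by
  have : (fun p : ℝ × (Fin n → ℝ) => (Fin.insertNth 0 p.1 p.2 : Fin (n+1) → ℝ))
      = fun p => Fin.cons p.1 p.2 := by
    ext p i
    rw [Fin.insertNth_zero']
  rw [this]
  apply AnalyticOnNhd.pi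
  intro i
  induction i using Fin.cases with
  | zero => simpa using (ContinuousLinearMap.fst ℝ ℝ (Fin n → ℝ)).analyticOnNhd Set.univ
  | succ j =>
      simpa using (show AnalyticOnNhd ℝ (fun x : ℝ × (Fin n → ℝ) => x.2 j) Set.univ from
        ((ContinuousLinearMap.proj j).comp
        (ContinuousLinearMap.snd ℝ ℝ (Fin n → ℝ))).analyticOnNhd Set.univ)

lemma analytic_zero_null {n : ℕ} {f : (Fin n → ℝ) → ℝ} (hf : AnalyticOnNhd ℝ f Set.univ)
    (hne : ∃ x, f x ≠ 0) : volume {x | f x = 0} = 0 := by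
  induction n with
  | zero =>
      obtain ⟨x₀, hx₀⟩ := hne
      have : {x : Fin 0 → ℝ | f x = 0} = ∅ := by
        ext x
        simp only [Set.mem_setOf_eq, Set.mem_empty_iff_false, iff_false]
        rwa [Subsingleton.elim x x₀]
      simp [this]
  | succ n ih =>
      obtain ⟨x₀, hx₀⟩ := hne
      have hZc : IsClosed {x | f x = 0} := isClosed_eq (analytic_continuous hf) continuous_const
      set e := MeasurableEquiv.piFinSuccAbove (fun _ : Fin (n+1) => ℝ) 0 with he
      have hmp : MeasurePreserving e.symm volume volume :=
        (volume_preserving_piFinSuccAbove (fun _ : Fin (n+1) => ℝ) 0).symm e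
      rw [← hmp.measure_preimage hZc.measurableSet.nullMeasurableSet]
      have hpre : e.symm ⁻¹' {x | f x = 0}
          = {p : ℝ × (Fin n → ℝ) | f (Fin.insertNth 0 p.1 p.2) = 0} := by
        ext p
        simp only [Set.mem_preimage, Set.mem_setOf_eq, he,
          MeasurableEquiv.piFinSuccAbove_symm_apply]
        rfl
      rw [hpre, Measure.volume_eq_prod]
      -- g analytic jointly
      have hg : AnalyticOnNhd ℝ (fun p : ℝ × (Fin n → ℝ) => f (Fin.insertNth 0 p.1 p.2))
          Set.univ := hf.comp (analytic_insertNth n) (Set.mapsTo_univ _ _)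
      have hmeas : MeasurableSet {p : ℝ × (Fin n → ℝ) | f (Fin.insertNth 0 p.1 p.2) = 0} :=
        (isClosed_eq (analytic_continuous hg) continuous_const).measurableSet
      rw [MeasureTheory.Measure.measure_prod_null hmeas]
      -- bad t's: where t ↦ f (insertNth 0 t (x₀ ∘ succAbove)) vanishes
      set x₀' : Fin n → ℝ := fun j => x₀ ((0 : Fin (n+1)).succAbove j) with hx₀'
      have hx₀eq : Fin.insertNth 0 (x₀ 0) x₀' = x₀ := by
        ext i
        exact Fin.insertNth_self_removeNth 0 x₀ ▸ rfl
      have hslice1 : AnalyticOnNhd ℝ (fun t : ℝ => f (Fin.insertNth 0 t x₀')) Set.univ := by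
        have : (fun t : ℝ => f (Fin.insertNth 0 t x₀'))
            = (fun p : ℝ × (Fin n → ℝ) => f (Fin.insertNth 0 p.1 p.2)) ∘ (fun t => (t, x₀')) := rfl
        rw [this]
        exact hg.comp (analyticOnNhd_id.prod analyticOnNhd_const) (Set.mapsTo_univ _ _)
      have hbad : volume {t : ℝ | f (Fin.insertNth 0 t x₀') = 0} = 0 := by
        apply analytic_zero_null_1d hslice1 (x₀ := x₀ 0)
        rw [hx₀eq]; exact hx₀
      filter_upwards [measure_eq_zero_iff_ae_notMem.1 hbad] with t ht
      -- slice in x'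
      have hslice2 : AnalyticOnNhd ℝ (fun x' : Fin n → ℝ => f (Fin.insertNth 0 t x')) Set.univ := by
        have : (fun x' : Fin n → ℝ => f (Fin.insertNth 0 t x'))
            = (fun p : ℝ × (Fin n → ℝ) => f (Fin.insertNth 0 p.1 p.2)) ∘ (fun x' => (t, x')) := rfl
        rw [this]
        exact hg.comp (analyticOnNhd_const.prod analyticOnNhd_id) (Set.mapsTo_univ _ _)
      have := ih hslice2 ⟨x₀', ht⟩
      convert this using 1
      all_goals rfl


noncomputable def sigmo (t : ℝ) : ℝ := Real.exp t / (1 + Real.exp t)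

lemma sigmo_nonneg (t : ℝ) : 0 ≤ sigmo t := by
  unfold sigmo; positivity

lemma sigmo_le_one (t : ℝ) : sigmo t ≤ 1 := by
  unfold sigmo
  rw [div_le_one (by positivity)]
  linarith

lemma sigmo_tendsto_atTop : Tendsto sigmo atTop (𝓝 1) := by
  have h : ∀ t : ℝ, sigmo t = 1 - 1 / (1 + Real.exp t) := by
    intro t
    have h1 : (0:ℝ) < 1 + Real.exp t := by positivity
    rw [eq_sub_iff_add_eq, sigmo, ← add_div, div_eq_one_iff_eq h1.ne']; ring
  rw [show sigmo = fun t : ℝ => 1 - 1 / (1 + Real.exp t) from funext h]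
  have : Tendsto (fun t : ℝ => 1 / (1 + Real.exp t)) atTop (𝓝 0) := by
    apply Tendsto.div_atTop tendsto_const_nhds
    exact tendsto_atTop_add_const_left _ 1 Real.tendsto_exp_atTop
  simpa using tendsto_const_nhds.sub this

lemma sigmo_tendsto_atBot : Tendsto sigmo atBot (𝓝 0) := by
  have h : Tendsto (fun t : ℝ => Real.exp t) atBot (𝓝 0) := Real.tendsto_exp_atBot
  have hd : Tendsto (fun t : ℝ => 1 + Real.exp t) atBot (𝓝 1) := by
    simpa using tendsto_const_nhds.add h
  have := h.div hd one_ne_zero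
  rw [div_one] at this
  exact this

lemma softplus_hasDerivAt {α t : ℝ} (hα : α ≠ 0) :
    HasDerivAt (fun z => Real.log (1 + Real.exp (α * z)) / α) (sigmo (α * t)) t := by
  have h1 : HasDerivAt (fun z : ℝ => α * z) α t := by
    simpa using (hasDerivAt_id t).const_mul α
  have hexp : HasDerivAt (fun z : ℝ => Real.exp (α * z)) (Real.exp (α * t) * α) t :=
    (Real.hasDerivAt_exp (α * t)).comp t h1
  have hadd : HasDerivAt (fun z : ℝ => 1 + Real.exp (α * z)) (Real.exp (α * t) * α) t :=
    hexp.const_add 1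
  have hpos : (0:ℝ) < 1 + Real.exp (α * t) := by positivity
  have hlog : HasDerivAt (fun z : ℝ => Real.log (1 + Real.exp (α * z)))
      ((1 + Real.exp (α * t))⁻¹ * (Real.exp (α * t) * α)) t :=
    HasDerivAt.comp (h₂ := Real.log) t (Real.hasDerivAt_log hpos.ne') hadd
  have := hlog.div_const α
  refine this.congr_deriv ?_
  unfold sigmo
  field_simp

lemma softplus_analyticAt {α : ℝ} (hα : α ≠ 0) (z : ℝ) :
    AnalyticAt ℝ (fun z => Real.log (1 + Real.exp (α * z)) / α) z := by
  have h1 : AnalyticAt ℝ (fun z : ℝ => 1 + Real.exp (α * z)) z :=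
    analyticAt_const.add (analyticAt_rexp.comp (analyticAt_const.mul analyticAt_id))
  have hpos : (0:ℝ) < 1 + Real.exp (α * z) := by positivity
  have hlog : AnalyticAt ℝ Real.log (1 + Real.exp (α * z)) :=
    (Real.contDiffAt_log.2 hpos.ne').analyticAt
  have hcomp : AnalyticAt ℝ (Real.log ∘ fun z : ℝ => 1 + Real.exp (α * z)) z :=
    AnalyticAt.comp (x := z) hlog h1
  have hc2 : AnalyticAt ℝ (fun z : ℝ => Real.log (1 + Real.exp (α * z))) z := hcomp
  have := hc2.mul (analyticAt_const (v := α⁻¹))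
  rw [show (fun z => Real.log (1 + Real.exp (α * z)) / α) =
      (fun z => Real.log (1 + Real.exp (α * z))) * fun _ => α⁻¹ from by
        funext z; simp [div_eq_mul_inv]]
  exact this

lemma softplus_sub_max_bounds {α t : ℝ} (hα : 0 < α) :
    0 ≤ Real.log (1 + Real.exp (α * t)) / α - max t 0 ∧
    Real.log (1 + Real.exp (α * t)) / α - max t 0 ≤ Real.log 2 / α := by
  have hexp_pos : (0:ℝ) < Real.exp (α * t) := Real.exp_pos _
  rcases le_or_gt 0 t with ht | ht
  · rw [max_eq_left ht]
    constructor
    · rw [sub_nonneg, le_div_iff₀ hα]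
      calc t * α = Real.log (Real.exp (α * t)) := by rw [Real.log_exp]; ring
        _ ≤ Real.log (1 + Real.exp (α * t)) := by
            apply Real.log_le_log hexp_pos; linarith
    · rw [div_sub' hα.ne', div_le_div_iff₀ hα hα]
      have key : Real.log (1 + Real.exp (α * t)) - t * α ≤ Real.log 2 := by
        have : Real.log (1 + Real.exp (α * t)) = Real.log ((Real.exp (-(α * t)) + 1) * Real.exp (α * t)) := by
          congr 1
          rw [add_mul, ← Real.exp_add, one_mul]
          simp
        rw [this, Real.log_mul (by positivity) hexp_pos.ne', Real.log_exp]
        have h2 : Real.exp (-(α * t)) ≤ 1 := Real.exp_le_one_iff.2 (by nlinarith)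
        have := Real.log_le_log (by positivity) (by linarith : Real.exp (-(α*t)) + 1 ≤ 2)
        linarith
      nlinarith
  · rw [max_eq_right ht.le]
    constructor
    · have hh1 : (1:ℝ) ≤ 1 + Real.exp (α * t) := by linarith
      have hh2 := Real.log_nonneg hh1
      rw [sub_zero]
      exact div_nonneg hh2 hα.le
    · rw [sub_zero, div_le_div_iff₀ hα hα, mul_comm (Real.log 2) α]
      have h2 : Real.exp (α * t) ≤ 1 := Real.exp_le_one_iff.2 (by nlinarith)
      have := Real.log_le_log (by positivity) (by linarith : 1 + Real.exp (α*t) ≤ 2)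
      nlinarith [Real.log_nonneg (by norm_num : (1:ℝ) ≤ 2)]


lemma box_interior_volume {n : ℕ} (a b : Fin n → ℝ) :
    volume (interior (Set.uIcc a b)) = volume (Set.uIcc a b) := by
  rw [Set.uIcc, ← Set.pi_univ_Icc, interior_pi_set Set.finite_univ, volume_pi_pi, volume_pi_pi]
  congr 1
  funext i
  rw [interior_Icc, Real.volume_Ioo, Real.volume_Icc]




/-- A feed-forward neural network architecture (composition of layers, each followed
by componentwise identity or ReLU, as recorded by a Boolean vector). -/
inductive NN : ℕ → ℕ → Type where
  | input (k : ℕ) : NN k k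
  | layer {k l r : ℕ} (prev : NN k l) (F : (Fin l → ℝ) → (Fin r → ℝ)) (s : Fin r → Bool) :
      NN k r

/-- Evaluation of a network: each layer applies `F` and then, componentwise, either
ReLU (`max · 0`) or the identity. -/
noncomputable def NN.eval : {k r : ℕ} → NN k r → (Fin k → ℝ) → Fin r → ℝ
  | _, _, .input _, x => x
  | _, _, .layer prev F s, x => fun i =>
      if s i then max (F (NN.eval prev x) i) 0 else F (NN.eval prev x) i

/-- The softplus approximation of the network: every ReLU is replaced with the
parameterized softplus `s_α(z) = ln(1 + exp(αz))/α`. -/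
noncomputable def NN.evalSoft (α : ℝ) : {k r : ℕ} → NN k r → (Fin k → ℝ) → Fin r → ℝ
  | _, _, .input _, x => x
  | _, _, .layer prev F s, x => fun i =>
      if s i then Real.log (1 + Real.exp (α * F (NN.evalSoft α prev x) i)) / α
      else F (NN.evalSoft α prev x) i

/-- All layer functions of the network are real analytic. -/
def NN.IsAnalytic : {k r : ℕ} → NN k r → Prop
  | _, _, .input _ => True
  | _, _, .layer prev F _ =>
      prev.IsAnalytic ∧ ∀ i, AnalyticOnNhd ℝ (fun x => F x i) Set.univ

/-- **Topology of softplus approximations**: for any `F ∈ F²(a,b)` there is an open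
set `U ⊆ [a,b]` of full measure such that at each `x ∈ U`: (1) `F` agrees with a real
analytic function on `[a,b]` in an open neighborhood `B_x` of `x`; (2) the gradient
`∇F(x)` exists; and (3) `∇F_α(x) → ∇F(x)` as `α → ∞`, where `F_α` is the softplus
approximation of `F`. -/






lemma NN.eval_continuous : ∀ {k r : ℕ} (net : NN k r), net.IsAnalytic →
    Continuous (fun x => net.eval x) := by
  intro k r net
  induction net with
  | input =>
      intro _
      simp only [NN.eval]
      exact continuous_id
  | layer prev F s ih =>
      intro h
      rw [NN.IsAnalytic] at h
      obtain ⟨hp, hF⟩ := h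
      have hFc : Continuous F := continuous_pi fun i => analytic_continuous (hF i)
      have hprev := ih hp
      apply continuous_pi
      intro i
      simp only [NN.eval]
      by_cases hsi : s i
      · simp only [hsi, if_true]
        exact (((continuous_apply i).comp (hFc.comp hprev))).max continuous_const
      · simp only [hsi, if_false]
        exact (continuous_apply i).comp (hFc.comp hprev)

lemma NN.evalSoft_analytic : ∀ {k r : ℕ} (net : NN k r), net.IsAnalytic →
    ∀ {α : ℝ}, α ≠ 0 → ∀ i, AnalyticOnNhd ℝ (fun x => net.evalSoft α x i) Set.univ := by
  intro k r net
  induction net with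
  | input =>
      intro _ α hα i
      simp only [NN.evalSoft]
      exact (ContinuousLinearMap.proj i (R := ℝ) (φ := fun _ : Fin k => ℝ)).analyticOnNhd Set.univ
  | layer prev F s ih =>
      intro h α hα i
      rw [NN.IsAnalytic] at h
      obtain ⟨hp, hF⟩ := h
      have hprev : AnalyticOnNhd ℝ (fun x => prev.evalSoft α x) Set.univ :=
        AnalyticOnNhd.pi (fun j => ih hp hα j)
      have hq : AnalyticOnNhd ℝ (fun x => F (prev.evalSoft α x) i) Set.univ :=
        (hF i).comp hprev (Set.mapsTo_univ _ _)
      simp only [NN.evalSoft]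
      by_cases hsi : s i
      · simp only [hsi, if_true]
        intro x _
        exact AnalyticAt.comp (x := x) (softplus_analyticAt hα _) (hq x (Set.mem_univ x))
      · simp only [hsi, if_false]
        exact hq







/-- `ContinuousLinearMap.pi` as a linear map, for continuity purposes. -/
noncomputable def piCLM (E : Type*) [NormedAddCommGroup E] [NormedSpace ℝ E]
    (ι : Type*) [Fintype ι] :
    (∀ _ : ι, E →L[ℝ] ℝ) →ₗ[ℝ] (E →L[ℝ] (ι → ℝ)) where
  toFun f := ContinuousLinearMap.pi f
  map_add' f g := by ext x i; simp
  map_smul' c f := by ext x i; simp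

theorem NN.good {n : ℕ} : ∀ {r : ℕ} (net : NN n r), net.IsAnalytic →
    ∃ Z : Set (Fin n → ℝ), IsClosed Z ∧ volume Z = 0 ∧
      ∀ x ∉ Z, ∃ V : Set (Fin n → ℝ), IsOpen V ∧ x ∈ V ∧
        ∃ G : (Fin n → ℝ) → (Fin r → ℝ),
          (∀ i, AnalyticOnNhd ℝ (fun y => G y i) Set.univ) ∧
          (∀ y ∈ V, net.eval y = G y) ∧
          (∀ i, Tendsto (fun α : ℝ => net.evalSoft α x i) atTop (𝓝 (net.eval x i))) ∧
          (∀ i, Tendsto (fun α : ℝ => fderiv ℝ (fun y => net.evalSoft α y i) x) atTop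
            (𝓝 (fderiv ℝ (fun y => net.eval y i) x))) := by
  intro r net
  induction net with
  | input =>
      intro _
      refine ⟨∅, isClosed_empty, measure_empty, fun x _ => ?_⟩
      refine ⟨Set.univ, isOpen_univ, trivial, fun y => y, ?_, ?_, ?_, ?_⟩
      · intro i
        exact (ContinuousLinearMap.proj i (R := ℝ) (φ := fun _ : Fin n => ℝ)).analyticOnNhd Set.univ
      · intro y _; simp only [NN.eval]
      · intro i; simp only [NN.evalSoft, NN.eval]; exact tendsto_const_nhds
      · intro i; simp only [NN.evalSoft, NN.eval]; exact tendsto_const_nhds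
  | @layer l r2 prev F s ih =>
      intro hnet
      rw [NN.IsAnalytic] at hnet
      obtain ⟨hp, hF⟩ := hnet
      obtain ⟨Zp, hZpc, hZp0, hprop⟩ := ih hp
      -- the pre-activation functions
      set g : _ → _ → ℝ := fun (i : Fin _) x => F (prev.eval x) i with hg
      have hgc : ∀ i, Continuous (g i) := fun i =>
        (analytic_continuous (hF i)).comp (NN.eval_continuous prev hp)
      have hTc : ∀ i, IsClosed {x | g i x = 0} := fun i =>
        isClosed_eq (hgc i) continuous_const
      classical
      set bad : Fin _ → Set (Fin n → ℝ) :=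
        fun i => if s i then frontier {x | g i x = 0} else ∅ with hbad
      refine ⟨Zp ∪ ⋃ i, bad i, ?_, ?_, ?_⟩
      · apply hZpc.union
        apply isClosed_iUnion_of_finite
        intro i
        by_cases hsi : s i <;> simp [hbad, hsi, isClosed_frontier]
      · -- null
        apply measure_union_null hZp0
        apply measure_iUnion_null
        intro i
        by_cases hsi : s i
        · simp only [hbad, hsi, if_true]
          have hsplit : frontier {x | g i x = 0}
              ⊆ Zp ∪ (frontier {x | g i x = 0} \ Zp) := by
            intro y hy
            by_cases hyZ : y ∈ Zp
            · exact Or.inl hyZ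
            · exact Or.inr ⟨hy, hyZ⟩
          refine measure_mono_null hsplit (measure_union_null hZp0 ?_)
          apply measure_null_of_locally_null
          intro x hx
          obtain ⟨hxf, hxZp⟩ := hx
          obtain ⟨V, hVo, hxV, G, hGan, hGeq, -, -⟩ := hprop x hxZp
          have han : AnalyticOnNhd ℝ (fun y => F (G y) i) Set.univ :=
            (hF i).comp (AnalyticOnNhd.pi hGan) (Set.mapsTo_univ _ _)
          by_cases hzero : ∀ y, F (G y) i = 0
          · exfalso
            have hVT : V ⊆ {y | g i y = 0} := by
              intro y hy
              simp only [Set.mem_setOf_eq, hg]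
              rw [hGeq y hy]; exact hzero y
            have hxint : x ∈ interior {y | g i y = 0} := interior_maximal hVT hVo hxV
            rw [(hTc i).frontier_eq] at hxf
            exact hxf.2 hxint
          · push_neg at hzero
            refine ⟨V ∩ (frontier {x | g i x = 0} \ Zp), ?_, ?_⟩
            · exact Filter.inter_mem
                (mem_nhdsWithin_of_mem_nhds (hVo.mem_nhds hxV)) self_mem_nhdsWithin
            · apply measure_mono_null _ (analytic_zero_null han hzero)
              rintro y ⟨hyV, hyf, -⟩
              have hyT : g i y = 0 := ((hTc i).frontier_eq ▸ hyf).1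
              simp only [Set.mem_setOf_eq]
              rw [← hGeq y hyV]
              exact hyT
        · simp [hbad, hsi]
      · -- pointwise
        intro x hx
        have hxZp : x ∉ Zp := fun h => hx (Set.mem_union_left _ h)
        have hxbad : ∀ i, x ∉ bad i := fun i h =>
          hx (Set.mem_union_right _ (Set.mem_iUnion.2 ⟨i, h⟩))
        obtain ⟨V, hVo, hxV, G, hGan, hGeq, hval, hfd⟩ := hprop x hxZp
        have hGanPi : AnalyticOnNhd ℝ G Set.univ := AnalyticOnNhd.pi hGan
        have heqev : (fun y => prev.eval y) =ᶠ[𝓝 x] G :=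
          Filter.eventuallyEq_of_mem (hVo.mem_nhds hxV) hGeq
        have hevdiff : DifferentiableAt ℝ (fun y => prev.eval y) x :=
          (heqev.differentiableAt_iff).2 (hGanPi x trivial).differentiableAt
        have hvalv : Tendsto (fun α : ℝ => prev.evalSoft α x) atTop (𝓝 (prev.eval x)) :=
          tendsto_pi_nhds.2 hval
        have hsoftdiff : ∀ (α : ℝ), α ≠ 0 →
            DifferentiableAt ℝ (fun y => prev.evalSoft α y) x := fun α hα =>
          differentiableAt_pi.2 fun j =>
            ((NN.evalSoft_analytic prev hp hα j) x trivial).differentiableAt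
        -- vector-level fderiv convergence
        have hfdv : Tendsto (fun α : ℝ => fderiv ℝ (fun y => prev.evalSoft α y) x) atTop
            (𝓝 (fderiv ℝ (fun y => prev.eval y) x)) := by
          have hcont : Continuous (piCLM (Fin n → ℝ) (Fin l)) :=
            (piCLM _ _).continuous_of_finiteDimensional
          have hlim : Tendsto (fun α : ℝ => piCLM (Fin n → ℝ) (Fin l)
                (fun j => fderiv ℝ (fun y => prev.evalSoft α y j) x)) atTop
              (𝓝 (piCLM (Fin n → ℝ) (Fin l) (fun j => fderiv ℝ (fun y => prev.eval y j) x))) :=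
            (hcont.tendsto _).comp (tendsto_pi_nhds.2 hfd)
          have heq1 : (fun α : ℝ => piCLM (Fin n → ℝ) (Fin l)
                (fun j => fderiv ℝ (fun y => prev.evalSoft α y j) x))
              =ᶠ[atTop] (fun α : ℝ => fderiv ℝ (fun y => prev.evalSoft α y) x) := by
            filter_upwards [eventually_ne_atTop (0:ℝ)] with α hα
            exact (fderiv_pi (fun j =>
              ((NN.evalSoft_analytic prev hp hα j) x trivial).differentiableAt)).symm
          have heq2 : piCLM (Fin n → ℝ) (Fin l) (fun j => fderiv ℝ (fun y => prev.eval y j) x)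
              = fderiv ℝ (fun y => prev.eval y) x :=
            (fderiv_pi (fun j => differentiableAt_pi.1 hevdiff j)).symm
          rw [← heq2]
          exact Tendsto.congr' heq1 hlim
        -- per-component data
        have key : ∀ i, ∃ (W : Set (Fin n → ℝ)) (ρ : (Fin n → ℝ) → ℝ),
            IsOpen W ∧ x ∈ W ∧ AnalyticOnNhd ℝ ρ Set.univ ∧
            (∀ y ∈ W, (NN.layer prev F s).eval y i = ρ y) ∧
            Tendsto (fun α : ℝ => (NN.layer prev F s).evalSoft α x i) atTop
              (𝓝 ((NN.layer prev F s).eval x i)) ∧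
            Tendsto (fun α : ℝ => fderiv ℝ (fun y => (NN.layer prev F s).evalSoft α y i) x)
              atTop (𝓝 (fderiv ℝ (fun y => (NN.layer prev F s).eval y i) x)) := by
          intro i
          set φ : (Fin _ → ℝ) → ℝ := fun z => F z i with hφ
          have hφan : AnalyticOnNhd ℝ φ Set.univ := hF i
          have hφc1 : ContDiff ℝ 1 φ := hφan.contDiff
          have hφGan : AnalyticOnNhd ℝ (fun y => φ (G y)) Set.univ :=
            hφan.comp hGanPi (Set.mapsTo_univ _ _)
          have hqval : Tendsto (fun α : ℝ => φ (prev.evalSoft α x)) atTop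
              (𝓝 (φ (prev.eval x))) := (hφc1.continuous.tendsto _).comp hvalv
          have hqdiff : ∀ (α : ℝ), α ≠ 0 →
              DifferentiableAt ℝ (fun y => φ (prev.evalSoft α y)) x := fun α hα =>
            DifferentiableAt.comp x (hφan _ trivial).differentiableAt (hsoftdiff α hα)
          have hgieq : g i =ᶠ[𝓝 x] (fun y => φ (G y)) := by
            filter_upwards [hVo.mem_nhds hxV] with y hy
            simp only [hg, hφ]
            rw [hGeq y hy]
          have hgdiff : DifferentiableAt ℝ (g i) x :=
            (hgieq.differentiableAt_iff).2 (hφGan x trivial).differentiableAt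
          -- convergence of the fderivs of the pre-activations
          have hqfd : Tendsto (fun α : ℝ => fderiv ℝ (fun y => φ (prev.evalSoft α y)) x)
              atTop (𝓝 (fderiv ℝ (g i) x)) := by
            have hA : Tendsto (fun α : ℝ => fderiv ℝ φ (prev.evalSoft α x)) atTop
                (𝓝 (fderiv ℝ φ (prev.eval x))) :=
              ((hφc1.continuous_fderiv one_ne_zero).tendsto _).comp hvalv
            have hcomp : Tendsto (fun α : ℝ =>
                  (fderiv ℝ φ (prev.evalSoft α x)).comp
                    (fderiv ℝ (fun y => prev.evalSoft α y) x)) atTop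
                (𝓝 ((fderiv ℝ φ (prev.eval x)).comp
                    (fderiv ℝ (fun y => prev.eval y) x))) :=
              (isBoundedBilinearMap_comp.continuous.tendsto _).comp (hA.prodMk_nhds hfdv)
            have heqc : (fun α : ℝ => (fderiv ℝ φ (prev.evalSoft α x)).comp
                  (fderiv ℝ (fun y => prev.evalSoft α y) x))
                =ᶠ[atTop] (fun α : ℝ => fderiv ℝ (fun y => φ (prev.evalSoft α y)) x) := by
              filter_upwards [eventually_ne_atTop (0:ℝ)] with α hα
              exact (fderiv_comp x (hφan _ trivial).differentiableAt (hsoftdiff α hα)).symm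
            have hlimeq : fderiv ℝ (g i) x = (fderiv ℝ φ (prev.eval x)).comp
                (fderiv ℝ (fun y => prev.eval y) x) :=
              fderiv_comp x (hφan _ trivial).differentiableAt hevdiff
            rw [hlimeq]
            exact Tendsto.congr' heqc hcomp
          by_cases hsi : s i
          · -- ReLU case
            -- generic value convergence
            have hvaltend : Tendsto (fun α : ℝ => (NN.layer prev F s).evalSoft α x i) atTop
                (𝓝 ((NN.layer prev F s).eval x i)) := by
              have hfe : (fun α : ℝ => (NN.layer prev F s).evalSoft α x i)
                  = fun α : ℝ => Real.log (1 + Real.exp (α * φ (prev.evalSoft α x))) / α := by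
                funext α; simp only [NN.evalSoft, hsi, if_true, hφ]
              have hee : (NN.layer prev F s).eval x i = max (φ (prev.eval x)) 0 := by
                simp only [NN.eval, hsi, if_true, hφ]
              rw [hfe, hee]
              have t1 : Tendsto (fun α : ℝ => max (φ (prev.evalSoft α x)) 0) atTop
                  (𝓝 (max (φ (prev.eval x)) 0)) :=
                ((continuous_id.max continuous_const).tendsto _).comp hqval
              have t2 : Tendsto (fun α : ℝ =>
                  Real.log (1 + Real.exp (α * φ (prev.evalSoft α x))) / α
                    - max (φ (prev.evalSoft α x)) 0) atTop (𝓝 0) := by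
                apply squeeze_zero_norm' (a := fun α : ℝ => Real.log 2 / α)
                · filter_upwards [eventually_gt_atTop (0:ℝ)] with α hα
                  have hb := softplus_sub_max_bounds (t := φ (prev.evalSoft α x)) hα
                  rw [Real.norm_eq_abs, abs_of_nonneg hb.1]
                  exact hb.2
                · exact tendsto_const_nhds.div_atTop tendsto_id
              have := t2.add t1
              simp only [sub_add_cancel, zero_add] at this
              exact this
            rcases lt_trichotomy (g i x) 0 with hc | hc | hc
            · -- negative: ReLU locally zero
              -- chain rule, eventually in α
              have hchain : (fun α : ℝ => fderiv ℝ (fun y => (NN.layer prev F s).evalSoft α y i) x)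
                  =ᶠ[atTop] (fun α : ℝ => sigmo (α * φ (prev.evalSoft α x)) •
                    fderiv ℝ (fun y => φ (prev.evalSoft α y)) x) := by
                filter_upwards [eventually_ne_atTop (0:ℝ)] with α hα
                have h1 : (fun y => (NN.layer prev F s).evalSoft α y i)
                    = fun y => Real.log (1 + Real.exp (α * φ (prev.evalSoft α y))) / α := by
                  funext y; simp only [NN.evalSoft, hsi, if_true, hφ]
                rw [h1]
                exact ((softplus_hasDerivAt hα).comp_hasFDerivAt x
                  (hqdiff α hα).hasFDerivAt).fderiv
              have hσ : Tendsto (fun α : ℝ => sigmo (α * φ (prev.evalSoft α x))) atTop (𝓝 0) := by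
                apply sigmo_tendsto_atBot.comp
                have hlt : ∀ᶠ α : ℝ in atTop, φ (prev.evalSoft α x) < g i x / 2 :=
                  hqval.eventually (eventually_lt_nhds (by linarith : g i x < g i x / 2))
                have hev : ∀ᶠ α : ℝ in atTop, α * φ (prev.evalSoft α x) ≤ g i x / 2 * α := by
                  filter_upwards [hlt, eventually_ge_atTop (0:ℝ)] with α h1 h2
                  calc α * φ (prev.evalSoft α x) = φ (prev.evalSoft α x) * α := mul_comm _ _
                    _ ≤ g i x / 2 * α := mul_le_mul_of_nonneg_right h1.le h2
                exact tendsto_atBot_mono' _ hev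
                  (Tendsto.const_mul_atTop_of_neg (by linarith : g i x / 2 < 0) tendsto_id)
              have hprod := hσ.smul hqfd
              rw [zero_smul] at hprod
              have hW : IsOpen (V ∩ {y | φ (G y) < 0}) :=
                hVo.inter (isOpen_lt (analytic_continuous hφGan) continuous_const)
              have hxW : x ∈ V ∩ {y | φ (G y) < 0} := by
                refine ⟨hxV, ?_⟩
                show φ (G x) < 0
                rw [← hGeq x hxV]
                exact hc
              have he : (fun y => (NN.layer prev F s).eval y i) =ᶠ[𝓝 x] (fun _ => (0:ℝ)) := by
                filter_upwards [hW.mem_nhds hxW] with y hy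
                simp only [NN.eval, hsi, if_true]
                have h2 : F (prev.eval y) i = φ (G y) := by
                  show F (prev.eval y) i = F (G y) i
                  rw [hGeq y hy.1]
                rw [h2]
                exact max_eq_right hy.2.le
              have htar : fderiv ℝ (fun y => (NN.layer prev F s).eval y i) x = 0 := by
                rw [he.fderiv_eq]
                exact fderiv_const_apply 0
              refine ⟨V ∩ {y | φ (G y) < 0}, fun _ => (0:ℝ), hW, hxW, analyticOnNhd_const, ?_,
                hvaltend, ?_⟩
              · intro y hy
                simp only [NN.eval, hsi, if_true]
                have h2 : F (prev.eval y) i = φ (G y) := by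
                  show F (prev.eval y) i = F (G y) i
                  rw [hGeq y hy.1]
                rw [h2]
                exact max_eq_right hy.2.le
              · rw [htar]
                exact Tendsto.congr' hchain.symm hprod

            · -- zero
              -- chain rule, eventually in α
              have hchain : (fun α : ℝ => fderiv ℝ (fun y => (NN.layer prev F s).evalSoft α y i) x)
                  =ᶠ[atTop] (fun α : ℝ => sigmo (α * φ (prev.evalSoft α x)) •
                    fderiv ℝ (fun y => φ (prev.evalSoft α y)) x) := by
                filter_upwards [eventually_ne_atTop (0:ℝ)] with α hα
                have h1 : (fun y => (NN.layer prev F s).evalSoft α y i)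
                    = fun y => Real.log (1 + Real.exp (α * φ (prev.evalSoft α y))) / α := by
                  funext y; simp only [NN.evalSoft, hsi, if_true, hφ]
                rw [h1]
                exact ((softplus_hasDerivAt hα).comp_hasFDerivAt x
                  (hqdiff α hα).hasFDerivAt).fderiv
              have hxint : x ∈ interior {y | g i y = 0} := by
                have hb := hxbad i
                simp only [hbad, hsi, if_true] at hb
                rw [(hTc i).frontier_eq] at hb
                by_contra hno
                exact hb ⟨hc, hno⟩
              have hge0 : g i =ᶠ[𝓝 x] (fun _ => (0:ℝ)) := by
                filter_upwards [isOpen_interior.mem_nhds hxint] with y hy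
                have h2 : y ∈ {y | g i y = 0} := interior_subset hy
                exact h2
              have hD0 : fderiv ℝ (g i) x = 0 := by
                rw [hge0.fderiv_eq]
                exact fderiv_const_apply 0
              have hprod : Tendsto (fun α : ℝ => sigmo (α * φ (prev.evalSoft α x)) •
                  fderiv ℝ (fun y => φ (prev.evalSoft α y)) x) atTop
                  (𝓝 (0 : (Fin n → ℝ) →L[ℝ] ℝ)) := by
                apply squeeze_zero_norm'
                  (a := fun α : ℝ => ‖fderiv ℝ (fun y => φ (prev.evalSoft α y)) x‖)
                · apply Filter.Eventually.of_forall
                  intro α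
                  rw [norm_smul]
                  calc ‖sigmo (α * φ (prev.evalSoft α x))‖ *
                        ‖fderiv ℝ (fun y => φ (prev.evalSoft α y)) x‖
                      ≤ 1 * ‖fderiv ℝ (fun y => φ (prev.evalSoft α y)) x‖ := by
                        apply mul_le_mul_of_nonneg_right _ (norm_nonneg _)
                        rw [Real.norm_eq_abs, abs_of_nonneg (sigmo_nonneg _)]
                        exact sigmo_le_one _
                    _ = ‖fderiv ℝ (fun y => φ (prev.evalSoft α y)) x‖ := one_mul _
                · have := hqfd.norm
                  rw [hD0, norm_zero] at this
                  exact this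
              have he : (fun y => (NN.layer prev F s).eval y i) =ᶠ[𝓝 x] (fun _ => (0:ℝ)) := by
                filter_upwards [isOpen_interior.mem_nhds hxint] with y hy
                simp only [NN.eval, hsi, if_true]
                have h2 : y ∈ {y | g i y = 0} := interior_subset hy
                have h3 : F (prev.eval y) i = 0 := h2
                rw [h3]
                exact max_self 0
              have htar : fderiv ℝ (fun y => (NN.layer prev F s).eval y i) x = 0 := by
                rw [he.fderiv_eq]
                exact fderiv_const_apply 0
              refine ⟨interior {y | g i y = 0}, fun _ => (0:ℝ), isOpen_interior, hxint,
                analyticOnNhd_const, ?_, hvaltend, ?_⟩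
              · intro y hy
                simp only [NN.eval, hsi, if_true]
                have h2 : y ∈ {y | g i y = 0} := interior_subset hy
                have h3 : F (prev.eval y) i = 0 := h2
                rw [h3]
                exact max_self 0
              · rw [htar]
                exact Tendsto.congr' hchain.symm hprod

            · -- positive
              -- chain rule, eventually in α
              have hchain : (fun α : ℝ => fderiv ℝ (fun y => (NN.layer prev F s).evalSoft α y i) x)
                  =ᶠ[atTop] (fun α : ℝ => sigmo (α * φ (prev.evalSoft α x)) •
                    fderiv ℝ (fun y => φ (prev.evalSoft α y)) x) := by
                filter_upwards [eventually_ne_atTop (0:ℝ)] with α hα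
                have h1 : (fun y => (NN.layer prev F s).evalSoft α y i)
                    = fun y => Real.log (1 + Real.exp (α * φ (prev.evalSoft α y))) / α := by
                  funext y; simp only [NN.evalSoft, hsi, if_true, hφ]
                rw [h1]
                exact ((softplus_hasDerivAt hα).comp_hasFDerivAt x
                  (hqdiff α hα).hasFDerivAt).fderiv
              have hσ : Tendsto (fun α : ℝ => sigmo (α * φ (prev.evalSoft α x))) atTop (𝓝 1) := by
                apply sigmo_tendsto_atTop.comp
                have hgt : ∀ᶠ α : ℝ in atTop, g i x / 2 < φ (prev.evalSoft α x) :=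
                  hqval.eventually (eventually_gt_nhds (half_lt_self hc))
                have hev : ∀ᶠ α : ℝ in atTop, g i x / 2 * α ≤ α * φ (prev.evalSoft α x) := by
                  filter_upwards [hgt, eventually_ge_atTop (0:ℝ)] with α h1 h2
                  calc g i x / 2 * α ≤ φ (prev.evalSoft α x) * α :=
                        mul_le_mul_of_nonneg_right h1.le h2
                    _ = α * φ (prev.evalSoft α x) := mul_comm _ _
                exact tendsto_atTop_mono' _ hev
                  (Tendsto.const_mul_atTop (half_pos hc) tendsto_id)
              have hprod := hσ.smul hqfd
              rw [one_smul] at hprod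
              have hW : IsOpen (V ∩ {y | 0 < φ (G y)}) :=
                hVo.inter (isOpen_lt continuous_const (analytic_continuous hφGan))
              have hxW : x ∈ V ∩ {y | 0 < φ (G y)} := by
                refine ⟨hxV, ?_⟩
                show 0 < φ (G x)
                rw [← hGeq x hxV]
                exact hc
              have he : (fun y => (NN.layer prev F s).eval y i) =ᶠ[𝓝 x] (fun y => φ (G y)) := by
                filter_upwards [hW.mem_nhds hxW] with y hy
                simp only [NN.eval, hsi, if_true]
                have h2 : F (prev.eval y) i = φ (G y) := by
                  show F (prev.eval y) i = F (G y) i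
                  rw [hGeq y hy.1]
                rw [h2]
                exact max_eq_left hy.2.le
              have htar : fderiv ℝ (fun y => (NN.layer prev F s).eval y i) x = fderiv ℝ (g i) x := by
                rw [he.fderiv_eq, hgieq.fderiv_eq]
              refine ⟨V ∩ {y | 0 < φ (G y)}, fun y => φ (G y), hW, hxW, hφGan, ?_, hvaltend, ?_⟩
              · intro y hy
                have := he.self_of_nhds
                simp only [NN.eval, hsi, if_true]
                have h2 : F (prev.eval y) i = φ (G y) := by
                  show F (prev.eval y) i = F (G y) i
                  rw [hGeq y hy.1]
                rw [h2]
                exact max_eq_left hy.2.le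
              · rw [htar]
                exact Tendsto.congr' hchain.symm hprod

          · -- identity case
            refine ⟨V, fun y => φ (G y), hVo, hxV, hφGan, ?_, ?_, ?_⟩
            · intro y hy
              simp only [NN.eval, hsi, Bool.false_eq_true, if_false, hφ]
              rw [hGeq y hy]
            · have hfe : (fun α : ℝ => (NN.layer prev F s).evalSoft α x i)
                  = fun α : ℝ => φ (prev.evalSoft α x) := by
                funext α; simp only [NN.evalSoft, hsi, Bool.false_eq_true, if_false, hφ]
              have hee : (NN.layer prev F s).eval x i = φ (prev.eval x) := by
                simp only [NN.eval, hsi, Bool.false_eq_true, if_false, hφ]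
              rw [hfe, hee]
              exact hqval
            · have hfe : ∀ α : ℝ, (fun y => (NN.layer prev F s).evalSoft α y i)
                  = fun y => φ (prev.evalSoft α y) := by
                intro α; funext y; simp only [NN.evalSoft, hsi, Bool.false_eq_true, if_false, hφ]
              have hee : (fun y => (NN.layer prev F s).eval y i) = g i := by
                funext y; simp only [NN.eval, hsi, Bool.false_eq_true, if_false, hg]
              simp only [hfe, hee]
              exact hqfd
        choose W ρ hWo hWx hρan hρeq hρval hρfd using key
        refine ⟨⋂ i, W i, isOpen_iInter_of_finite hWo, Set.mem_iInter.2 hWx,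
          fun y i => ρ i y, fun i => hρan i, ?_, hρval, hρfd⟩
        intro y hy
        funext i
        exact hρeq i y (Set.mem_iInter.1 hy i)


theorem softplus_approximation_topology {n : ℕ} (a b : Fin n → ℝ)
    (net : NN n 1) (hnet : net.IsAnalytic) :
    ∃ U : Set (Fin n → ℝ), U ⊆ Set.uIcc a b ∧ IsOpen U ∧
      volume U = volume (Set.uIcc a b) ∧
      ∀ x ∈ U,
        (∃ B : Set (Fin n → ℝ), IsOpen B ∧ x ∈ B ∧
          ∃ H : (Fin n → ℝ) → ℝ, AnalyticOnNhd ℝ H (Set.uIcc a b) ∧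
            Set.EqOn (fun y => net.eval y 0) H (B ∩ Set.uIcc a b)) ∧
        DifferentiableAt ℝ (fun y => net.eval y 0) x ∧
        Tendsto (fun α : ℝ => fderiv ℝ (fun y => net.evalSoft α y 0) x) atTop
          (nhds (fderiv ℝ (fun y => net.eval y 0) x)) := by
  obtain ⟨Z, hZc, hZ0, hprop⟩ := net.good hnet
  refine ⟨interior (Set.uIcc a b) \ Z, ?_, isOpen_interior.sdiff hZc, ?_, ?_⟩
  · exact fun y hy => interior_subset hy.1
  · rw [measure_diff_null hZ0, box_interior_volume]
  · intro x hxU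
    obtain ⟨V, hVo, hxV, G, hGan, hGeq, hval, hfd⟩ := hprop x hxU.2
    refine ⟨⟨V, hVo, hxV, fun y => G y 0, fun z _ => hGan 0 z trivial, ?_⟩, ?_, hfd 0⟩
    · intro y hy
      show net.eval y 0 = G y 0
      rw [hGeq y hy.1]
    · have he : (fun y => net.eval y 0) =ᶠ[𝓝 x] (fun y => G y 0) := by
        filter_upwards [hVo.mem_nhds hxV] with y hy
        show net.eval y 0 = G y 0
        rw [hGeq y hy]
      exact he.differentiableAt_iff.2 ((hGan 0) x trivial).differentiableAt
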